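/- Consider regularized logistic regression with loss J(w, D) = (1/n) Σ_{i=1}^n log(1 + exp(-X_iᵀ w t_i)) + (λ/2)‖w‖₂², where each covariate vector satisfies X_i ∈ [0,1]^d and each label t_i ∈ {-1, 1}. If D and D' are two datasets of size n differing in a single sample, then the difference g(w) = J(w, D) - J(w, D') has gradient bounded by ‖∇g(w)‖_∞ ≤ 2/n for all w ∈ ℝ^d. -/

import Mathlib

open Finset

/-- Regularized logistic-regression loss
`J(w, D) = (1/n) Σᵢ log(1 + exp(-Xᵢᵀ w tᵢ)) + (λ/2)‖w‖₂²`. -/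
noncomputable def logRegLoss {n d : ℕ} (lam : ℝ) (X : Fin n → Fin d → ℝ)
    (t : Fin n → ℝ) (w : Fin d → ℝ) : ℝ :=
  (1 / n) * ∑ i, Real.log (1 + Real.exp (-(∑ j, X i j * w j) * t i)) +
    lam / 2 * ∑ j, (w j) ^ 2

lemma phi_fderiv {d : ℕ} (x : Fin d → ℝ) (s : ℝ) (w : Fin d → ℝ) :
    HasFDerivAt (fun w : Fin d → ℝ => Real.log (1 + Real.exp (-(∑ j, x j * w j) * s)))
      ((Real.exp (-(∑ j, x j * w j) * s) * (-s) / (1 + Real.exp (-(∑ j, x j * w j) * s))) •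
        (∑ j, x j • ContinuousLinearMap.proj (R := ℝ) (φ := fun _ : Fin d => ℝ) j)) w := by
  set ℓ : (Fin d → ℝ) →L[ℝ] ℝ :=
    ∑ j, x j • ContinuousLinearMap.proj (R := ℝ) (φ := fun _ : Fin d => ℝ) j with hℓdef
  have hℓ : HasFDerivAt (fun w : Fin d → ℝ => ∑ j, x j * w j) ℓ w := by
    have h : (fun w : Fin d → ℝ => ∑ j, x j * w j) = ⇑ℓ := by
      funext v
      simp [hℓdef, ContinuousLinearMap.sum_apply]
    rw [h]; exact ℓ.hasFDerivAt
  set u := ∑ j, x j * w j with hu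
  have h1 : HasDerivAt (fun u : ℝ => -u * s) (-s) u := by
    simpa using ((hasDerivAt_id u).neg.mul_const s)
  have h3 : HasDerivAt (fun u : ℝ => 1 + Real.exp (-u * s)) (Real.exp (-u * s) * (-s)) u :=
    (h1.exp).const_add 1
  have hpos : (0:ℝ) < 1 + Real.exp (-u * s) := by positivity
  have h4 := h3.log hpos.ne'
  exact h4.comp_hasFDerivAt w hℓ

lemma coef_bound (u s xv : ℝ) (hs : s = 1 ∨ s = -1) (h0 : 0 ≤ xv) (h1 : xv ≤ 1) :
    |Real.exp u * (-s) / (1 + Real.exp u) * xv| ≤ 1 := by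
  have he : 0 < Real.exp u := Real.exp_pos u
  have hde : (0:ℝ) < 1 + Real.exp u := by positivity
  have hd : Real.exp u / (1 + Real.exp u) ≤ 1 := by
    rw [div_le_one hde]; linarith
  have h2 : |Real.exp u * (-s) / (1 + Real.exp u)| = Real.exp u / (1 + Real.exp u) := by
    rw [abs_div, abs_mul, abs_neg]
    rcases hs with h | h <;> simp [h, abs_of_pos he, abs_of_pos hde]
  calc |Real.exp u * (-s) / (1 + Real.exp u) * xv|
      = |Real.exp u * (-s) / (1 + Real.exp u)| * |xv| := abs_mul _ _
    _ = Real.exp u / (1 + Real.exp u) * xv := by rw [h2, abs_of_nonneg h0]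
    _ ≤ 1 * 1 := by
        apply mul_le_mul hd h1 h0 zero_le_one
    _ = 1 := mul_one 1

/-- If datasets `(X, t)` and `(X', t')` (covariates in `[0,1]^d`, labels in
`{-1, 1}`) differ in a single sample, then the gradient of
`g(w) = J(w, D) - J(w, D')` satisfies `‖∇g(w)‖_∞ ≤ 2/n`; each partial
derivative is bounded by `2/n` in absolute value. -/
theorem stmt6 {n d : ℕ} (hn : 0 < n) (lam : ℝ) (hlam : 0 < lam)
    (X X' : Fin n → Fin d → ℝ) (t t' : Fin n → ℝ)
    (hX : ∀ i j, X i j ∈ Set.Icc (0 : ℝ) 1) (hX' : ∀ i j, X' i j ∈ Set.Icc (0 : ℝ) 1)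
    (ht : ∀ i, t i = 1 ∨ t i = -1) (ht' : ∀ i, t' i = 1 ∨ t' i = -1)
    (i₀ : Fin n) (hdiff : ∀ i, i ≠ i₀ → X i = X' i ∧ t i = t' i) :
    ∀ w : Fin d → ℝ,
      (⨆ j, |fderiv ℝ (fun w => logRegLoss lam X t w - logRegLoss lam X' t' w) w
        (Pi.single j 1)|) ≤ 2 / n := by
  intro w
  have hnR : (0:ℝ) < n := by exact_mod_cast hn
  have key : (fun w : Fin d → ℝ => logRegLoss lam X t w - logRegLoss lam X' t' w)
      = fun w : Fin d → ℝ => (1 / (n:ℝ)) *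
          (Real.log (1 + Real.exp (-(∑ j, X i₀ j * w j) * t i₀))
            - Real.log (1 + Real.exp (-(∑ j, X' i₀ j * w j) * t' i₀))) := by
    funext v
    unfold logRegLoss
    have hsum : ∑ i, Real.log (1 + Real.exp (-(∑ j, X i j * v j) * t i))
        - ∑ i, Real.log (1 + Real.exp (-(∑ j, X' i j * v j) * t' i))
        = Real.log (1 + Real.exp (-(∑ j, X i₀ j * v j) * t i₀))
          - Real.log (1 + Real.exp (-(∑ j, X' i₀ j * v j) * t' i₀)) := by
      rw [← Finset.sum_sub_distrib]
      apply Finset.sum_eq_single_of_mem i₀ (Finset.mem_univ _)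
      intro i _ hi
      rw [(hdiff i hi).1, (hdiff i hi).2]
      ring
    linear_combination (1 / (n:ℝ)) * hsum
  rw [key]
  have hA := phi_fderiv (X i₀) (t i₀) w
  have hB := phi_fderiv (X' i₀) (t' i₀) w
  have hD := (hA.sub hB).const_mul (1 / (n:ℝ))
  simp only [Pi.sub_apply] at hD
  rw [hD.fderiv]
  rcases isEmpty_or_nonempty (Fin d) with hE | hNE
  · rw [Real.iSup_of_isEmpty]
    positivity
  · apply ciSup_le
    intro j
    have happ : ∀ (x : Fin d → ℝ),
        ((∑ k, x k • ContinuousLinearMap.proj (R := ℝ) (φ := fun _ : Fin d => ℝ) k) :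
          (Fin d → ℝ) →L[ℝ] ℝ) (Pi.single j 1) = x j := by
      intro x
      simp [ContinuousLinearMap.sum_apply, Pi.single_apply, mul_ite,
        Finset.sum_ite_eq']
    simp only [ContinuousLinearMap.smul_apply, ContinuousLinearMap.sub_apply, happ,
      smul_eq_mul]
    have b1 := coef_bound (-(∑ k, X i₀ k * w k) * t i₀) (t i₀) (X i₀ j) (ht i₀)
      (hX i₀ j).1 (hX i₀ j).2
    have b2 := coef_bound (-(∑ k, X' i₀ k * w k) * t' i₀) (t' i₀) (X' i₀ j) (ht' i₀)
      (hX' i₀ j).1 (hX' i₀ j).2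
    rw [abs_mul, abs_of_pos (show (0:ℝ) < 1 / n by positivity)]
    have habs := (abs_sub _ _).trans (add_le_add b1 b2)
    have hm := mul_le_mul_of_nonneg_left habs
      (le_of_lt (show (0:ℝ) < 1 / n by positivity))
    have heq : (1 / (n:ℝ)) * (1 + 1) = 2 / n := by ring
    linarith
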